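/- Let (A, ≼) be a nonempty partially ordered set and N : A → ℝ an increasing function (a ≼ b implies N(a) ≤ N(b)) which is bounded above. Suppose every increasing sequence in A has an upper bound in A. Then there exists ā ∈ A such that for every b ∈ A with ā ≼ b, one has N(b) = N(ā). (Brézis–Browder ordering principle.) -/
import Mathlib


/-- Brézis–Browder ordering principle: if `N : A → ℝ` is increasing and bounded above on a
nonempty partially ordered set `A` in which every increasing sequence has an upper bound, then
there exists `ā ∈ A` such that `N(b) = N(ā)` for every `b ≥ ā`. -/
theorem brezis_browder {A : Type*} [PartialOrder A] [Nonempty A] (N : A → ℝ)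
    (hmono : ∀ a b : A, a ≤ b → N a ≤ N b)
    (hbdd : ∃ M : ℝ, ∀ a : A, N a ≤ M)
    (hchain : ∀ s : ℕ → A, (∀ n, s n ≤ s (n + 1)) → ∃ ub : A, ∀ n, s n ≤ ub) :
    ∃ abar : A, ∀ b : A, abar ≤ b → N b = N abar := by
  obtain ⟨M, hM⟩ := hbdd
  -- β a = sup of N over the upper set of a
  set β : A → ℝ := fun a => sSup (N '' {b | a ≤ b}) with hβ
  have hne : ∀ a : A, (N '' {b | a ≤ b}).Nonempty := fun a => ⟨N a, a, le_refl a, rfl⟩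
  have hbdd' : ∀ a : A, BddAbove (N '' {b | a ≤ b}) := by
    intro a
    exact ⟨M, by rintro _ ⟨c, -, rfl⟩; exact hM c⟩
  have hβub : ∀ a b : A, a ≤ b → N b ≤ β a := by
    intro a b hab
    exact le_csSup (hbdd' a) ⟨b, hab, rfl⟩
  -- choose, for each a and n, an element c ≥ a with N c > β a - (1/2)^n
  have hstep : ∀ (a : A) (n : ℕ), ∃ c : A, a ≤ c ∧ β a - (1/2 : ℝ)^n < N c := by
    intro a n
    have hlt : β a - (1/2 : ℝ)^n < β a := by
      have : (0:ℝ) < (1/2:ℝ)^n := by positivity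
      linarith
    obtain ⟨y, ⟨c, hc, rfl⟩, hy⟩ := exists_lt_of_lt_csSup (hne a) hlt
    exact ⟨c, hc, hy⟩
  choose f hf1 hf2 using hstep
  -- build increasing sequence
  let s : ℕ → A := fun n => Nat.rec (Classical.arbitrary A) (fun n a => f a n) n
  have hs : ∀ n, s n ≤ s (n + 1) := fun n => hf1 (s n) n
  obtain ⟨ub, hub⟩ := hchain s hs
  refine ⟨ub, fun b hb => ?_⟩
  have h1 : N ub ≤ N b := hmono _ _ hb
  have h2 : ∀ n : ℕ, N b ≤ N ub + (1/2 : ℝ)^n := by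
    intro n
    have hβn : N b ≤ β (s n) := hβub (s n) b ((hub n).trans hb)
    have := hf2 (s n) n
    have hub' : N (s (n+1)) ≤ N ub := hmono _ _ (hub (n+1))
    have : β (s n) - (1/2:ℝ)^n < N (s (n+1)) := this
    linarith
  have h3 : N b ≤ N ub := by
    refine le_of_forall_pos_le_add fun ε hε => ?_
    obtain ⟨n, hn⟩ := exists_pow_lt_of_lt_one hε (by norm_num : (1/2:ℝ) < 1)
    exact (h2 n).trans (by linarith)
  linarith
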